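/- For all k ≥ 1, the generating function Σ_{n ≥ k} Sf_{n,k}(p,q)·t^n equals t^k / ((1−F_1(p,q)t)(1−F_2(p,q)t)···(1−F_k(p,q)t)) as formal power series in t. -/

import Mathlib

open Polynomial Finset

variable {R : Type*} [CommRing R]

/-- The p,q-Fibonacci polynomials: F_0 = 0, F_1 = q, F_2 = q^2,
    F_n = q*F_{n-1} + p*F_{n-2} for n ≥ 3. -/
def fibP (p q : R) : ℕ → R
  | 0 => 0
  | 1 => q
  | 2 => q ^ 2
  | n + 3 => q * fibP p q (n + 2) + p * fibP p q (n + 1)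

/-- cf_{n,k}(p,q): cf_{0,0}=1, cf_{n,k}=0 if k>n or k<0,
    cf_{n+1,k} = cf_{n,k-1} + F_n(p,q)*cf_{n,k}. -/
def cfP (p q : R) : ℕ → ℕ → R
  | 0, 0 => 1
  | 0, _ + 1 => 0
  | n + 1, 0 => fibP p q n * cfP p q n 0
  | n + 1, k + 1 => cfP p q n k + fibP p q n * cfP p q n (k + 1)

/-- Sf_{n,k}(p,q): Sf_{0,0}=1, Sf_{n,k}=0 if k>n or k<0,
    Sf_{n+1,k} = Sf_{n,k-1} + F_k(p,q)*Sf_{n,k}. -/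
def SfP (p q : R) : ℕ → ℕ → R
  | 0, 0 => 1
  | 0, _ + 1 => 0
  | n + 1, 0 => fibP p q 0 * SfP p q n 0
  | n + 1, k + 1 => SfP p q n k + fibP p q (k + 1) * SfP p q n (k + 1)

/-- sf_{n,k}(p,q): sf_{0,0}=1, sf_{n,k}=0 if k>n or k<0,
    sf_{n+1,k} = sf_{n,k-1} - F_n(p,q)*sf_{n,k}. -/
def sfP (p q : R) : ℕ → ℕ → R
  | 0, 0 => 1
  | 0, _ + 1 => 0
  | n + 1, 0 => - (fibP p q n * sfP p q n 0)
  | n + 1, k + 1 => sfP p q n k - fibP p q n * sfP p q n (k + 1)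


lemma SfP_mk_zero (p q : R) :
    (PowerSeries.mk fun n => SfP p q n 0) = 1 := by
  ext n
  cases n with
  | zero => simp [SfP]
  | succ m =>
    have h : ∀ m, SfP p q m 0 = if m = 0 then 1 else 0 := by
      intro m
      induction m with
      | zero => simp [SfP]
      | succ m ih => simp [SfP, fibP, ih]
    simp [h, PowerSeries.coeff_one]

lemma SfP_mk_step (p q : R) (k : ℕ) :
    (PowerSeries.mk fun n => SfP p q n (k + 1)) *
        (1 - PowerSeries.C (fibP p q (k + 1)) * PowerSeries.X) =
      PowerSeries.X * (PowerSeries.mk fun n => SfP p q n k) := by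
  ext n
  rw [mul_sub, mul_one, map_sub]
  cases n with
  | zero => simp [SfP]
  | succ m =>
    rw [show PowerSeries.C (fibP p q (k+1)) * PowerSeries.X = PowerSeries.X * PowerSeries.C (fibP p q (k+1)) from mul_comm _ _,
      ← mul_assoc]
    rw [PowerSeries.coeff_mul_C, PowerSeries.coeff_succ_mul_X, PowerSeries.coeff_succ_X_mul]
    simp [SfP, mul_comm]

theorem SfP_generating_function'' (p q : R) (k : ℕ) :
    (PowerSeries.mk fun n => SfP p q n k) *
        ∏ i ∈ Finset.Icc 1 k, (1 - PowerSeries.C (fibP p q i) * PowerSeries.X) =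
      PowerSeries.X ^ k := by
  induction k with
  | zero => simp [SfP_mk_zero]
  | succ k ih =>
    rw [Finset.prod_Icc_succ_top (Nat.le_add_left 1 k), ← mul_assoc,
      mul_comm (PowerSeries.mk fun n => SfP p q n (k+1)),
      mul_assoc, SfP_mk_step, ← mul_assoc, mul_comm _ PowerSeries.X, mul_assoc,
      mul_comm _ (PowerSeries.mk fun n => SfP p q n k), ih, pow_succ, mul_comm]

theorem SfP_generating_function (p q : R) (k : ℕ) (hk : 1 ≤ k) :
    (PowerSeries.mk fun n => SfP p q n k) *
        ∏ i ∈ Finset.Icc 1 k, (1 - PowerSeries.C (fibP p q i) * PowerSeries.X) =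
      PowerSeries.X ^ k := SfP_generating_function'' p q k
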